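/- Compactness of rate-function sublevel sets: fix s < −1/2 and v₀ ∈ L²₀(𝕋), and define I : H^s₀(𝕋) → [0, ∞] by I(f) = (1/2) Σ_{n≠0} |f_n − (v₀)_n|² if f ∈ L²₀(𝕋) and I(f) = +∞ otherwise. Then for every finite r ≥ 0, the sublevel set K_r = {f ∈ H^s₀(𝕋) : I(f) ≤ r} is a compact subset of H^s₀(𝕋) (with the H^s norm topology), and K_r ⊆ L²₀(𝕋). -/
import Mathlib


open MeasureTheory
open scoped NNReal ENNReal ComplexConjugate

/-- The weight `⟨n⟩^s = (1 + n²)^{s/2}`. -/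
noncomputable def wt (s : ℝ) (n : ℤ) : ℝ := (1 + (n : ℝ) ^ 2) ^ (s / 2)

section RateAuxSection
open Filter Topology Set

namespace RateAux

lemma rpow_two' (x : ℝ) : x ^ ((2:ℝ≥0∞).toReal) = x ^ 2 := by
  rw [show ((2:ℝ≥0∞).toReal) = ((2:ℕ):ℝ) by norm_num, Real.rpow_natCast]

lemma memℓp_two {x : ℤ → ℂ} (h : Summable fun n => ‖x n‖ ^ 2) : Memℓp x 2 :=
  memℓp_gen ((summable_congr fun n => rpow_two' _).mpr h)

lemma norm_sq_eq_tsum (f : lp (fun _ : ℤ => ℂ) 2) : ‖f‖ ^ 2 = ∑' n, ‖f n‖ ^ 2 := by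
  have h := lp.norm_rpow_eq_tsum (p := 2) (by norm_num) f
  simpa only [rpow_two'] using h

lemma eval_continuous (n : ℤ) : Continuous fun f : lp (fun _ : ℤ => ℂ) 2 => f n := by
  apply LipschitzWith.continuous (K := 1)
  apply LipschitzWith.of_dist_le_mul
  intro f g
  rw [NNReal.coe_one, one_mul, dist_eq_norm, dist_eq_norm]
  have : (f : ℤ → ℂ) n - g n = (f - g) n := by simp [lp.coeFn_sub]
  rw [this]
  exact lp.norm_apply_le_norm two_ne_zero _ _


lemma cube_isCompact (c : ℤ → ℝ) (hc : Summable fun n => c n ^ 2) :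
    IsCompact {f : lp (fun _ : ℤ => ℂ) 2 | ∀ n, ‖f n‖ ≤ c n} := by
  classical
  set D : Set (ℤ → ℂ) := Set.univ.pi (fun n => Metric.closedBall 0 (c n)) with hDdef
  have hDnorm : ∀ x ∈ D, ∀ n, ‖x n‖ ≤ c n := fun x hx n => by
    simpa [dist_zero_right] using hx n (Set.mem_univ n)
  have hDsum : ∀ x ∈ D, Summable fun n => ‖x n‖ ^ 2 := fun x hx =>
    Summable.of_nonneg_of_le (fun n => sq_nonneg _)
      (fun n => pow_le_pow_left₀ (norm_nonneg _) (hDnorm x hx n) 2) hc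
  have hmem : ∀ x ∈ D, Memℓp x 2 := fun x hx => memℓp_two (hDsum x hx)
  set Ψ : (ℤ → ℂ) → lp (fun _ : ℤ => ℂ) 2 :=
    fun x => if h : Memℓp x 2 then ⟨x, h⟩ else 0 with hΨdef
  have hΨapp : ∀ x, Memℓp x 2 → ∀ n, (Ψ x) n = x n := by
    intro x h n
    simp only [hΨdef, dif_pos h]
  have hset : {f : lp (fun _ : ℤ => ℂ) 2 | ∀ n, ‖f n‖ ≤ c n} = Ψ '' D := by
    ext f
    constructor
    · intro hf
      refine ⟨⇑f, fun n _ => by simpa [dist_zero_right] using hf n, ?_⟩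
      simp only [hΨdef, dif_pos (lp.memℓp f)]
    · rintro ⟨x, hx, rfl⟩ n
      rw [hΨapp x (hmem x hx) n]
      exact hDnorm x hx n
  rw [hset]
  have hDc : IsCompact D := isCompact_univ_pi fun n => isCompact_closedBall _ _
  apply hDc.image_of_continuousOn
  intro x hx
  have h4c : Summable fun n : ℤ => 4 * c n ^ 2 := hc.mul_left 4
  rw [ContinuousWithinAt, Metric.tendsto_nhds]
  intro ε hε
  have hε2 : 0 < ε ^ 2 / 2 := by positivity
  obtain ⟨F, hF⟩ : ∃ F : Finset ℤ, ∑' n : {m : ℤ // m ∉ F}, 4 * c (n : ℤ) ^ 2 < ε ^ 2 / 2 :=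
    ((tendsto_tsum_compl_atTop_zero (fun n : ℤ => 4 * c n ^ 2)).eventually
      (gt_mem_nhds hε2)).exists
  set δ : ℝ := Real.sqrt (ε ^ 2 / 2 / (F.card + 1)) with hδdef
  have hδpos : 0 < δ := Real.sqrt_pos.mpr (by positivity)
  have hδsq : δ ^ 2 = ε ^ 2 / 2 / (F.card + 1) := Real.sq_sqrt (by positivity)
  have hV : (Set.pi ↑F fun n => Metric.ball (x n) δ) ∈ 𝓝 x :=
    set_pi_mem_nhds F.finite_toSet fun n _ => Metric.ball_mem_nhds _ hδpos
  filter_upwards [mem_nhdsWithin_of_mem_nhds hV, self_mem_nhdsWithin] with y hyV hyD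
  have hterm : ∀ n : ℤ, ‖y n - x n‖ ^ 2 ≤ 4 * c n ^ 2 := by
    intro n
    have h1 : ‖y n - x n‖ ≤ 2 * c n := by
      calc ‖y n - x n‖ ≤ ‖y n‖ + ‖x n‖ := norm_sub_le _ _
        _ ≤ c n + c n := add_le_add (hDnorm y hyD n) (hDnorm x hx n)
        _ = 2 * c n := by ring
    calc ‖y n - x n‖ ^ 2 ≤ (2 * c n) ^ 2 := pow_le_pow_left₀ (norm_nonneg _) h1 2
      _ = 4 * c n ^ 2 := by ring
  have hsum_d : Summable fun n => ‖y n - x n‖ ^ 2 :=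
    Summable.of_nonneg_of_le (fun n => sq_nonneg _) hterm h4c
  have hnormsq : ‖Ψ y - Ψ x‖ ^ 2 = ∑' n, ‖y n - x n‖ ^ 2 := by
    rw [norm_sq_eq_tsum]
    refine tsum_congr fun n => ?_
    have : (Ψ y - Ψ x) n = y n - x n := by
      rw [lp.coeFn_sub, Pi.sub_apply, hΨapp y (hmem y hyD), hΨapp x (hmem x hx)]
    rw [this]
  have hsplit := Summable.sum_add_tsum_compl (s := F) hsum_d
  have hsum_F : ∑ n ∈ F, ‖y n - x n‖ ^ 2 ≤ (F.card : ℝ) * δ ^ 2 := by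
    have hb : ∀ n ∈ F, ‖y n - x n‖ ^ 2 ≤ δ ^ 2 := by
      intro n hn
      have hball : y n ∈ Metric.ball (x n) δ := hyV n hn
      have hlt : ‖y n - x n‖ < δ := by
        rw [Metric.mem_ball, dist_eq_norm] at hball
        exact hball
      exact pow_le_pow_left₀ (norm_nonneg _) hlt.le 2
    calc ∑ n ∈ F, ‖y n - x n‖ ^ 2 ≤ ∑ _n ∈ F, δ ^ 2 := Finset.sum_le_sum hb
      _ = (F.card : ℝ) * δ ^ 2 := by rw [Finset.sum_const, nsmul_eq_mul]
  have hcard : (F.card : ℝ) * δ ^ 2 < ε ^ 2 / 2 := by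
    rw [hδsq]
    have h1 : (F.card : ℝ) / (F.card + 1) < 1 := by
      rw [div_lt_one (by positivity)]
      linarith
    calc (F.card : ℝ) * (ε ^ 2 / 2 / (F.card + 1))
        = (ε ^ 2 / 2) * ((F.card : ℝ) / (F.card + 1)) := by ring
      _ < (ε ^ 2 / 2) * 1 := by
          exact mul_lt_mul_of_pos_left h1 hε2
      _ = ε ^ 2 / 2 := mul_one _
  have htailb : ∑' n : {m : ℤ // m ∉ F}, ‖y (n : ℤ) - x (n : ℤ)‖ ^ 2
      ≤ ∑' n : {m : ℤ // m ∉ F}, 4 * c (n : ℤ) ^ 2 :=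
    Summable.tsum_le_tsum (fun n => hterm n) (hsum_d.subtype _) (h4c.subtype _)
  have hfinal : ‖Ψ y - Ψ x‖ ^ 2 < ε ^ 2 := by
    rw [hnormsq, ← hsplit]
    have := add_lt_add_of_le_of_lt (le_trans hsum_F hcard.le) (lt_of_le_of_lt htailb hF)
    calc ∑ n ∈ F, ‖y n - x n‖ ^ 2 + ∑' n : {m : ℤ // m ∉ F}, ‖y (n:ℤ) - x (n:ℤ)‖ ^ 2
        < ε ^ 2 / 2 + ε ^ 2 / 2 := by
          refine add_lt_add_of_le_of_lt (le_trans hsum_F hcard.le) (lt_of_le_of_lt htailb hF)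
      _ = ε ^ 2 := by ring
  rw [dist_eq_norm]
  exact lt_of_pow_lt_pow_left₀ 2 hε.le hfinal

end RateAux


noncomputable section
namespace RateAux

lemma wt_pos (s : ℝ) (n : ℤ) : 0 < wt s n :=
  Real.rpow_pos_of_pos (by positivity) _

lemma wt_le_one {s : ℝ} (hs : s ≤ 0) (n : ℤ) : wt s n ≤ 1 :=
  Real.rpow_le_one_of_one_le_of_nonpos
    (le_add_of_nonneg_right (sq_nonneg _)) (by linarith)

lemma wt_sq {s : ℝ} (n : ℤ) : wt s n ^ 2 = (1 + (n : ℝ) ^ 2) ^ s := by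
  rw [wt, ← Real.rpow_natCast ((1 + (n:ℝ)^2) ^ (s/2)) 2, ← Real.rpow_mul (by positivity)]
  norm_num

lemma summable_wt_sq {s : ℝ} (hs : s < -(1/2)) : Summable fun n : ℤ => wt s n ^ 2 := by
  have hkey : Summable fun k : ℕ => (1 + ((k : ℤ) : ℝ) ^ 2) ^ s := by
    have h1 : Summable fun k : ℕ => ((k : ℝ) + 1) ^ (2 * s) := by
      have h0 : Summable fun k : ℕ => ((k : ℝ)) ^ (2 * s) :=
        Real.summable_nat_rpow.mpr (by linarith)
      have := (summable_nat_add_iff 1).mpr h0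
      refine this.congr fun k => ?_
      push_cast
      ring_nf
    have h2 : Summable fun k : ℕ => (2 : ℝ) ^ (-s) * ((k : ℝ) + 1) ^ (2 * s) := h1.mul_left _
    refine Summable.of_nonneg_of_le (fun k => (Real.rpow_pos_of_pos (by positivity) _).le)
      (fun k => ?_) h2
    have hb : (((k : ℝ) + 1) ^ 2) / 2 ≤ 1 + ((k : ℤ) : ℝ) ^ 2 := by
      push_cast
      nlinarith [sq_nonneg ((k:ℝ) - 1)]
    have hbpos : (0:ℝ) < (((k : ℝ) + 1) ^ 2) / 2 := by positivity
    calc (1 + ((k : ℤ) : ℝ) ^ 2) ^ s ≤ ((((k : ℝ) + 1) ^ 2) / 2) ^ s :=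
          Real.rpow_le_rpow_of_nonpos hbpos hb (by linarith)
      _ = (2:ℝ) ^ (-s) * ((k : ℝ) + 1) ^ (2 * s) := by
          rw [Real.div_rpow (by positivity) (by norm_num),
            ← Real.rpow_natCast ((k:ℝ)+1) 2, ← Real.rpow_mul (by positivity),
            Real.rpow_neg (by norm_num), div_eq_mul_inv]
          push_cast
          ring_nf
  have : Summable fun n : ℤ => (1 + (n : ℝ) ^ 2) ^ s := by
    refine Summable.of_nat_of_neg hkey (hkey.congr fun k => ?_)
    push_cast
    ring_nf
  exact this.congr fun n => (wt_sq n).symm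

end RateAux

end
end RateAuxSection

/-- The Sobolev space `H^s₀(𝕋)` of real-valued mean-zero distributions, realized as the
space of sequences `a : ℤ → ℂ` with `a_0 = 0`, `a_{-n} = conj (a_n)` and
`∑_{n ≠ 0} ⟨n⟩^{2s} |a_n|² < ∞`: an element stores the weighted sequence `b_n = ⟨n⟩^s a_n`
(square-summable precisely when `a ∈ H^s`, with `lp`-norm equal to the `H^s` norm of `a`;
since `⟨-n⟩ = ⟨n⟩` is real, the constraints on `a` translate verbatim to `b`). The Fourier
coefficients `a_n` are recovered via `coeff`. -/
noncomputable def Hs0 (_s : ℝ) : Submodule ℝ (lp (fun _ : ℤ => ℂ) 2) where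
  carrier := {f | f 0 = 0 ∧ ∀ n : ℤ, f (-n) = conj (f n)}
  zero_mem' := by
    refine ⟨rfl, fun n => ?_⟩
    simp [lp.coeFn_zero]
  add_mem' := by
    rintro f g ⟨hf0, hfs⟩ ⟨hg0, hgs⟩
    refine ⟨?_, fun n => ?_⟩
    · simp only [lp.coeFn_add, Pi.add_apply, hf0, hg0, add_zero]
    · simp only [lp.coeFn_add, Pi.add_apply, hfs n, hgs n, map_add]
  smul_mem' := by
    rintro c f ⟨hf0, hfs⟩
    refine ⟨?_, fun n => ?_⟩
    · simp only [lp.coeFn_smul, Pi.smul_apply, hf0, smul_zero]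
    · simp only [lp.coeFn_smul, Pi.smul_apply, hfs n, Complex.real_smul, map_mul,
        Complex.conj_ofReal]

/-- The `n`-th Fourier coefficient of an element of `H^s₀(𝕋)`. -/
noncomputable def coeff (s : ℝ) (f : Hs0 s) (n : ℤ) : ℂ :=
  ((wt s n)⁻¹ : ℝ) * ((f : lp (fun _ : ℤ => ℂ) 2) n)

/-- The rate function `I : H^s₀(𝕋) → [0, ∞]`, `I(f) = (1/2) ∑_{n ≠ 0} |f_n - (v₀)_n|²`
(an `ℝ≥0∞`-valued sum, which is finite exactly when `f ∈ L²₀(𝕋)` and `= ∞` otherwise,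
for `v₀ ∈ L²₀(𝕋)`). -/
noncomputable def rate (s : ℝ) (v₀ : ℤ → ℂ) (f : Hs0 s) : ℝ≥0∞ :=
  (1 / 2) * ∑' n : {m : ℤ // m ≠ 0}, ENNReal.ofReal (‖coeff s f (n : ℤ) - v₀ (n : ℤ)‖ ^ 2)

/-- compactness of rate-function sublevel sets: for `s < -1/2` and
`v₀ ∈ L²₀(𝕋)`, for every finite `r ≥ 0` the sublevel set
`K_r = {f ∈ H^s₀(𝕋) : I(f) ≤ r}` is compact in `H^s₀(𝕋)` (with the `H^s` norm topology),
and `K_r ⊆ L²₀(𝕋)` (i.e. every `f ∈ K_r` has square-summable Fourier coefficients). -/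
theorem rate_sublevel_compact
    (s : ℝ) (hs : s < -(1 / 2)) (v₀ : ℤ → ℂ) (hv0 : v₀ 0 = 0)
    (hvsym : ∀ n : ℤ, v₀ (-n) = conj (v₀ n)) (hvsum : Summable fun n : ℤ => ‖v₀ n‖ ^ 2)
    (r : ℝ) (hr : 0 ≤ r) :
    IsCompact {f : Hs0 s | rate s v₀ f ≤ ENNReal.ofReal r} ∧
      ∀ f ∈ {f : Hs0 s | rate s v₀ f ≤ ENNReal.ofReal r},
        Summable fun n : ℤ => ‖coeff s f n‖ ^ 2 := by
  classical
  set c : ℤ → ℝ := fun n => wt s n * (‖v₀ n‖ + Real.sqrt (2 * r)) with hcdef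
  have hwtsq := RateAux.summable_wt_sq hs
  have hcsq : Summable fun n => c n ^ 2 := by
    refine Summable.of_nonneg_of_le (fun n => sq_nonneg _) (fun n => ?_)
      ((hvsum.mul_left 2).add (hwtsq.mul_left (4 * r)))
    have h1 : wt s n ≤ 1 := RateAux.wt_le_one (by linarith) n
    have h2 : 0 < wt s n := RateAux.wt_pos s n
    have h3 : Real.sqrt (2 * r) ^ 2 = 2 * r := Real.sq_sqrt (by linarith)
    have h4 : 0 ≤ ‖v₀ n‖ := norm_nonneg _
    have h5 : 0 ≤ Real.sqrt (2 * r) := Real.sqrt_nonneg _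
    have h6 : wt s n ^ 2 ≤ 1 := by nlinarith
    simp only [hcdef]
    nlinarith [sq_nonneg (‖v₀ n‖ - Real.sqrt (2 * r)), sq_nonneg (wt s n * ‖v₀ n‖),
      mul_nonneg (sq_nonneg (wt s n)) (sq_nonneg ‖v₀ n‖), sq_nonneg ‖v₀ n‖]
  -- tsum bound for elements of the sublevel set
  have hT : ∀ f : Hs0 s, rate s v₀ f ≤ ENNReal.ofReal r →
      ∑' m : {m : ℤ // m ≠ 0}, ENNReal.ofReal (‖coeff s f (m : ℤ) - v₀ (m : ℤ)‖ ^ 2)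
        ≤ ENNReal.ofReal (2 * r) := by
    intro f hf
    unfold rate at hf
    have h3 := mul_le_mul_right hf (2 : ℝ≥0∞)
    rw [← mul_assoc, show (2 : ℝ≥0∞) * (1 / 2) = 1 by
        rw [one_div, ENNReal.mul_inv_cancel] <;> norm_num, one_mul] at h3
    rwa [ENNReal.ofReal_mul (by norm_num : (0:ℝ) ≤ 2), ENNReal.ofReal_ofNat]
  have hterm : ∀ f : Hs0 s, rate s v₀ f ≤ ENNReal.ofReal r → ∀ n : ℤ, n ≠ 0 →
      ‖coeff s f n - v₀ n‖ ^ 2 ≤ 2 * r := by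
    intro f hf n hn
    have h1 := ENNReal.le_tsum (f := fun m : {m : ℤ // m ≠ 0} =>
      ENNReal.ofReal (‖coeff s f (m : ℤ) - v₀ (m : ℤ)‖ ^ 2)) ⟨n, hn⟩
    have h2 := le_trans h1 (hT f hf)
    rwa [ENNReal.ofReal_le_ofReal_iff (by linarith)] at h2
  -- summability of coefficients (second half of the statement)
  have hsummK : ∀ f : Hs0 s, rate s v₀ f ≤ ENNReal.ofReal r →
      Summable fun n : ℤ => ‖coeff s f n‖ ^ 2 := by
    intro f hf
    obtain ⟨hf0, hfsym⟩ := f.2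
    have hTne : (∑' m : {m : ℤ // m ≠ 0},
        ENNReal.ofReal (‖coeff s f (m : ℤ) - v₀ (m : ℤ)‖ ^ 2)) ≠ ∞ :=
      ne_top_of_le_ne_top ENNReal.ofReal_ne_top (hT f hf)
    have hsub : Summable fun m : {m : ℤ // m ≠ 0} => ‖coeff s f (m : ℤ) - v₀ (m : ℤ)‖ ^ 2 := by
      refine (ENNReal.summable_toReal hTne).congr fun m => ?_
      rw [ENNReal.toReal_ofReal (sq_nonneg _)]
    have hc0 : coeff s f 0 = 0 := by
      rw [coeff, hf0, mul_zero]
    have hind : ({m : ℤ | m ≠ 0}).indicator (fun n => ‖coeff s f n - v₀ n‖ ^ 2) =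
        fun n => ‖coeff s f n - v₀ n‖ ^ 2 := by
      funext n
      rcases eq_or_ne n 0 with rfl | hn
      · simp [Set.indicator, hc0, hv0]
      · simp [Set.indicator, hn]
    have he : Summable fun n : ℤ => ‖coeff s f n - v₀ n‖ ^ 2 := by
      rw [← hind]
      exact summable_subtype_iff_indicator.mp hsub
    refine Summable.of_nonneg_of_le (fun n => sq_nonneg _) (fun n => ?_)
      ((he.mul_left 2).add (hvsum.mul_left 2))
    have h := norm_add_le (coeff s f n - v₀ n) (v₀ n)
    rw [sub_add_cancel] at h
    nlinarith [norm_nonneg (coeff s f n), norm_nonneg (coeff s f n - v₀ n), norm_nonneg (v₀ n),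
      sq_nonneg (‖coeff s f n - v₀ n‖ - ‖v₀ n‖)]
  refine ⟨?_, fun f hf => hsummK f hf⟩
  -- compactness
  set G : Set (lp (fun _ : ℤ => ℂ) 2) :=
    {g | g 0 = 0} ∩ ({g | ∀ n : ℤ, g (-n) = conj (g n)} ∩
      {g | (1 / 2 : ℝ≥0∞) * ∑' m : {m : ℤ // m ≠ 0},
        ENNReal.ofReal (‖(((wt s (m : ℤ))⁻¹ : ℝ) : ℂ) * g (m : ℤ) - v₀ (m : ℤ)‖ ^ 2)
          ≤ ENNReal.ofReal r}) with hGdef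
  have hGclosed : IsClosed G := by
    refine IsClosed.inter ?_ (IsClosed.inter ?_ ?_)
    · exact isClosed_eq (RateAux.eval_continuous 0) continuous_const
    · have hrw : {g : lp (fun _ : ℤ => ℂ) 2 | ∀ n : ℤ, g (-n) = conj (g n)} =
          ⋂ n : ℤ, {g : lp (fun _ : ℤ => ℂ) 2 | g (-n) = conj (g n)} := by
        ext g; simp
      rw [hrw]
      refine isClosed_iInter fun n => isClosed_eq (RateAux.eval_continuous (-n)) ?_
      have hconj : Continuous fun g : lp (fun _ : ℤ => ℂ) 2 => conj (g n) := by
        simp only [starRingEnd_apply]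
        exact (RateAux.eval_continuous n).star
      exact hconj
    · have hlsc : LowerSemicontinuous fun g : lp (fun _ : ℤ => ℂ) 2 =>
          (1 / 2 : ℝ≥0∞) * ∑' m : {m : ℤ // m ≠ 0},
            ENNReal.ofReal (‖(((wt s (m : ℤ))⁻¹ : ℝ) : ℂ) * g (m : ℤ) - v₀ (m : ℤ)‖ ^ 2) := by
        have h1 : LowerSemicontinuous fun g : lp (fun _ : ℤ => ℂ) 2 =>
            ∑' m : {m : ℤ // m ≠ 0},
              ENNReal.ofReal (‖(((wt s (m : ℤ))⁻¹ : ℝ) : ℂ) * g (m : ℤ) - v₀ (m : ℤ)‖ ^ 2) := by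
          apply lowerSemicontinuous_tsum
          intro m
          apply Continuous.lowerSemicontinuous
          exact ENNReal.continuous_ofReal.comp
            (((continuous_const.mul (RateAux.eval_continuous (m : ℤ))).sub
              continuous_const).norm.pow 2)
        exact (ENNReal.continuous_const_mul (by norm_num)).comp_lowerSemicontinuous h1
          fun a b hab => mul_le_mul_right hab _
      exact hlsc.isClosed_preimage (ENNReal.ofReal r)
  have himage : Subtype.val '' {f : Hs0 s | rate s v₀ f ≤ ENNReal.ofReal r} =
      {g : lp (fun _ : ℤ => ℂ) 2 | ∀ n, ‖g n‖ ≤ c n} ∩ G := by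
    ext g
    constructor
    · rintro ⟨f, hf, rfl⟩
      obtain ⟨hf0, hfsym⟩ := f.2
      refine ⟨?_, hf0, hfsym, hf⟩
      intro n
      rcases eq_or_ne n 0 with rfl | hn
      · rw [hf0, norm_zero]
        exact mul_nonneg (RateAux.wt_pos s 0).le (by positivity)
      · have hb := hterm f hf n hn
        have h1 : ‖coeff s f n - v₀ n‖ ≤ Real.sqrt (2 * r) := Real.le_sqrt_of_sq_le hb
        have h2 : ‖coeff s f n‖ ≤ ‖v₀ n‖ + Real.sqrt (2 * r) := by
          have h := norm_add_le (coeff s f n - v₀ n) (v₀ n)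
          rw [sub_add_cancel] at h
          calc ‖coeff s f n‖ ≤ ‖coeff s f n - v₀ n‖ + ‖v₀ n‖ := h
            _ ≤ Real.sqrt (2 * r) + ‖v₀ n‖ := by linarith
            _ = ‖v₀ n‖ + Real.sqrt (2 * r) := by ring
        have h3 : ((f : lp (fun _ : ℤ => ℂ) 2) : ℤ → ℂ) n = (wt s n : ℂ) * coeff s f n := by
          rw [coeff, ← mul_assoc]
          have hne : (wt s n : ℝ) ≠ 0 := (RateAux.wt_pos s n).ne'
          have : ((wt s n : ℝ) : ℂ) * (((wt s n)⁻¹ : ℝ) : ℂ) = 1 := by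
            rw [← Complex.ofReal_mul, mul_inv_cancel₀ hne, Complex.ofReal_one]
          rw [this, one_mul]
        calc ‖((f : lp (fun _ : ℤ => ℂ) 2) : ℤ → ℂ) n‖
            = wt s n * ‖coeff s f n‖ := by
              rw [h3, norm_mul, Complex.norm_real, Real.norm_eq_abs,
                abs_of_pos (RateAux.wt_pos s n)]
          _ ≤ wt s n * (‖v₀ n‖ + Real.sqrt (2 * r)) :=
              mul_le_mul_of_nonneg_left h2 (RateAux.wt_pos s n).le
          _ = c n := rfl
    · rintro ⟨hcube, hg0, hgsym, hgrate⟩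
      exact ⟨⟨g, ⟨hg0, hgsym⟩⟩, hgrate, rfl⟩
  rw [Subtype.isCompact_iff, himage]
  exact (RateAux.cube_isCompact c hcsq).inter_right hGclosed
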